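/- Let n ≥ 1 and let Ã be the symmetric (2n+2)×(2n+2) Seifert matrix above, with E⁺ the real eigenspace of the eigenvalue 2n-1. Then the set of integer vectors in E⁺, i.e., ℤ^{2n+2} ∩ E⁺, equals the set of integer multiples of w = e₁ + e_{2n+2}. -/

import Mathlib

open Matrix Finset

/-- The symmetrized Seifert matrix Ã of size (2n+2)×(2n+2) (0-indexed). -/
def Atilde (n : ℕ) : Matrix (Fin (2*n+2)) (Fin (2*n+2)) ℝ :=
  Matrix.of fun i j =>
    if i = j then -2
    else if ((i : ℕ) = 0 ∧ (j : ℕ) = 2*n+1) ∨ ((i : ℕ) = 2*n+1 ∧ (j : ℕ) = 0) then (2*n+1 : ℝ)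
    else if (i : ℕ) = 0 ∨ (j : ℕ) = 0 then 1
    else if (i : ℕ) = 2*n+1 ∨ (j : ℕ) = 2*n+1 then -1
    else 0

/-- The vector w = e₁ + e_{2n+2}. -/
def wvec (n : ℕ) : Fin (2*n+2) → ℝ :=
  fun i => if (i : ℕ) = 0 ∨ (i : ℕ) = 2*n+1 then 1 else 0

lemma Atilde_val (n : ℕ) (i j : Fin (2*n+2)) :
    Atilde n i j = if (i : ℕ) = (j : ℕ) then -2
      else if ((i : ℕ) = 0 ∧ (j : ℕ) = 2*n+1) ∨ ((i : ℕ) = 2*n+1 ∧ (j : ℕ) = 0) then (2*n+1 : ℝ)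
      else if (i : ℕ) = 0 ∨ (j : ℕ) = 0 then 1
      else if (i : ℕ) = 2*n+1 ∨ (j : ℕ) = 2*n+1 then -1
      else 0 := by
  simp only [Atilde, Matrix.of_apply, Fin.ext_iff]

lemma sum_two_aux {N : ℕ} (f : Fin N → ℝ) (a b : Fin N) (hab : a ≠ b)
    (h0 : ∀ j, j ≠ a → j ≠ b → f j = 0) : ∑ j, f j = f a + f b := by
  rw [← Finset.sum_subset (Finset.subset_univ ({a, b} : Finset (Fin N)))]
  · rw [Finset.sum_insert (by simp [hab]), Finset.sum_singleton]
  · intro y _ hy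
    simp only [Finset.mem_insert, Finset.mem_singleton] at hy
    push_neg at hy
    exact h0 y hy.1 hy.2

lemma sum_three_aux {N : ℕ} (f : Fin N → ℝ) (a b c : Fin N) (hab : a ≠ b) (hac : a ≠ c)
    (hbc : b ≠ c) (h0 : ∀ j, j ≠ a → j ≠ b → j ≠ c → f j = 0) :
    ∑ j, f j = f a + f b + f c := by
  rw [← Finset.sum_subset (Finset.subset_univ ({a, b, c} : Finset (Fin N)))]
  · rw [Finset.sum_insert (by simp [hab, hac]), Finset.sum_insert (by simp [hbc]),
      Finset.sum_singleton, add_assoc]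
  · intro y _ hy
    simp only [Finset.mem_insert, Finset.mem_singleton] at hy
    push_neg at hy
    exact h0 y hy.1 hy.2.1 hy.2.2

/-- The integer points of the eigenspace E⁺ of eigenvalue 2n-1 are exactly the
integer multiples of w = e₁ + e_{2n+2}. -/
theorem stmt_8 (n : ℕ) (hn : 1 ≤ n) (x : Fin (2*n+2) → ℤ) :
    (Atilde n).mulVec (fun i => (x i : ℝ)) = ((2*n : ℝ) - 1) • (fun i => (x i : ℝ))
      ↔ ∃ c : ℤ, ∀ i, (x i : ℝ) = c • wvec n i := by
  set a : Fin (2*n+2) := ⟨0, by omega⟩ with ha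
  set b : Fin (2*n+2) := ⟨2*n+1, by omega⟩ with hb
  have hav : (a : ℕ) = 0 := rfl
  have hbv : (b : ℕ) = 2*n+1 := rfl
  have hab : a ≠ b := by simp only [ha, hb, ne_eq, Fin.mk.injEq]; omega
  -- entry values used repeatedly
  have eaa : Atilde n a a = -2 := by
    rw [Atilde_val]; split_ifs <;> first | (exfalso; omega) | norm_num
  have eab : Atilde n a b = (2*n+1 : ℝ) := by
    rw [Atilde_val]; split_ifs <;> first | (exfalso; omega) | norm_num
  have eba : Atilde n b a = (2*n+1 : ℝ) := by
    rw [Atilde_val]; split_ifs <;> first | (exfalso; omega) | norm_num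
  have ebb : Atilde n b b = -2 := by
    rw [Atilde_val]; split_ifs <;> first | (exfalso; omega) | norm_num
  have eia : ∀ i : Fin (2*n+2), (i:ℕ) ≠ 0 → (i:ℕ) ≠ 2*n+1 → Atilde n i a = 1 := by
    intro i h1 h2; rw [Atilde_val]; split_ifs <;> first | (exfalso; omega) | norm_num
  have eib : ∀ i : Fin (2*n+2), (i:ℕ) ≠ 0 → (i:ℕ) ≠ 2*n+1 → Atilde n i b = -1 := by
    intro i h1 h2; rw [Atilde_val]; split_ifs <;> first | (exfalso; omega) | (exfalso; tauto) | norm_num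
  have eii : ∀ i : Fin (2*n+2), Atilde n i i = -2 := by
    intro i; rw [Atilde_val]; split_ifs <;> first | (exfalso; omega) | norm_num
  constructor
  · intro h
    have hrow : ∀ i, ∑ j, Atilde n i j * (x j : ℝ) = ((2*n:ℝ)-1) * x i := by
      intro i
      have := congrFun h i
      simpa [Matrix.mulVec, dotProduct] using this
    -- middle rows: (2n+1) x i = x a - x b
    have hmid : ∀ i : Fin (2*n+2), (i:ℕ) ≠ 0 → (i:ℕ) ≠ 2*n+1 →
        ((2*n:ℝ)+1) * x i = (x a : ℝ) - x b := by
      intro i hi0 hiN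
      have hia : a ≠ i := by simp [Fin.ext_iff, hav]; omega
      have hib : i ≠ b := by simp [Fin.ext_iff, hbv]; omega
      have hs := hrow i
      rw [sum_three_aux _ a i b hia (hab) hib ?_] at hs
      · rw [eia i hi0 hiN, eii i, eib i hi0 hiN] at hs
        linear_combination -hs
      · intro j hja hji hjb
        have hja' : (j:ℕ) ≠ 0 := fun h' => hja (by simp [Fin.ext_iff, hav, h'])
        have hjb' : (j:ℕ) ≠ 2*n+1 := fun h' => hjb (by simp [Fin.ext_iff, hbv, h'])
        have hji' : (j:ℕ) ≠ (i:ℕ) := fun h' => hji (by simp [Fin.ext_iff, h'])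
        have : Atilde n i j = 0 := by
          rw [Atilde_val]; split_ifs <;> first | (exfalso; omega) | norm_num
        rw [this, zero_mul]
    -- row 0
    have hs0 := hrow a
    have hsplit : ∀ j, Atilde n a j * (x j : ℝ) =
        (x j : ℝ) + (if j = a then (-3:ℝ) else if j = b then (2*n:ℝ) else 0) * x j := by
      intro j
      by_cases hja : j = a
      · subst hja; rw [eaa]; simp; ring
      · by_cases hjb : j = b
        · subst hjb; rw [eab, if_neg hab.symm, if_pos rfl]; ring
        · have hja' : (j:ℕ) ≠ 0 := fun h' => hja (by simp [Fin.ext_iff, hav, h'])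
          have hjb' : (j:ℕ) ≠ 2*n+1 := fun h' => hjb (by simp [Fin.ext_iff, hbv, h'])
          have : Atilde n a j = 1 := by
            rw [Atilde_val]; split_ifs <;> first | (exfalso; omega) | norm_num
          rw [this, if_neg hja, if_neg hjb]; ring
    rw [Finset.sum_congr rfl (fun j _ => hsplit j), Finset.sum_add_distrib] at hs0
    have hg : ∑ j, (if j = a then (-3:ℝ) else if j = b then (2*n:ℝ) else 0) * (x j : ℝ)
        = (-3) * (x a : ℝ) + (2*n : ℝ) * x b := by
      rw [sum_two_aux _ a b hab fun j hja hjb => by rw [if_neg hja, if_neg hjb, zero_mul]]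
      rw [if_pos rfl, if_neg hab.symm, if_pos rfl]
    rw [hg] at hs0
    -- hs0 : (∑ j, x j) + ((-3) * x a + (2n) * x b) = (2n-1) * x a
    set T : ℝ := ∑ j ∈ (Finset.univ \ {a, b} : Finset (Fin (2*n+2))), (x j : ℝ) with hT
    have hScomp : (∑ j, (x j : ℝ)) = T + ((x a : ℝ) + x b) := by
      rw [hT, ← Finset.sum_sdiff (Finset.subset_univ ({a,b} : Finset (Fin (2*n+2))))]
      congr 1
      rw [Finset.sum_insert (by simp [hab]), Finset.sum_singleton]
    have hcard : (Finset.univ \ ({a, b} : Finset (Fin (2*n+2)))).card = 2*n := by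
      have h2 : ({a, b} : Finset (Fin (2*n+2))).card = 2 := by
        rw [Finset.card_insert_of_notMem (by simp [hab]), Finset.card_singleton]
      rw [Finset.card_sdiff_of_subset (Finset.subset_univ _), h2, Finset.card_univ, Fintype.card_fin]
      omega
    have hterm : ∀ j ∈ (Finset.univ \ ({a,b} : Finset (Fin (2*n+2)))),
        (2*(n:ℝ)+1) * (x j : ℝ) = (x a : ℝ) - x b := by
      intro j hj
      simp only [Finset.mem_sdiff, Finset.mem_insert, Finset.mem_singleton] at hj
      push_neg at hj
      have hj0 : (j:ℕ) ≠ 0 := fun h' => hj.2.1 (by simp [Fin.ext_iff, hav, h'])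
      have hjN : (j:ℕ) ≠ 2*n+1 := fun h' => hj.2.2 (by simp [Fin.ext_iff, hbv, h'])
      exact hmid j hj0 hjN
    have hTval : ((2*n:ℝ)+1) * T = (2*n : ℝ) * ((x a : ℝ) - x b) := by
      calc (2*(n:ℝ)+1) * T = ∑ j ∈ (Finset.univ \ ({a,b} : Finset (Fin (2*n+2)))),
            ((2*(n:ℝ)+1) * (x j : ℝ)) := by rw [hT, Finset.mul_sum]
        _ = ∑ _j ∈ (Finset.univ \ ({a,b} : Finset (Fin (2*n+2)))), ((x a : ℝ) - x b) :=
            Finset.sum_congr rfl hterm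
        _ = (2*n : ℝ) * ((x a : ℝ) - x b) := by
            rw [Finset.sum_const, hcard, nsmul_eq_mul]; push_cast; ring
    have hd : ((x a : ℝ) - x b) * (4*(n:ℝ)^2 + 2*n + 1) = 0 := by
      linear_combination (-(2*(n:ℝ)+1)) * hs0 + (2*(n:ℝ)+1) * hScomp + hTval
    have hdd : (x a : ℝ) = x b := by
      have hpos : (4*(n:ℝ)^2 + 2*n + 1) ≠ 0 := by positivity
      have := mul_eq_zero.mp hd
      rcases this with h' | h'
      · linarith
      · exact absurd h' hpos
    refine ⟨x a, fun i => ?_⟩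
    by_cases hi0 : (i:ℕ) = 0
    · have : i = a := by simp [Fin.ext_iff, hav, hi0]
      subst this
      simp [wvec, hi0, zsmul_eq_mul]
    · by_cases hiN : (i:ℕ) = 2*n+1
      · have : i = b := by simp [Fin.ext_iff, hbv, hiN]
        subst this
        have hw : wvec n b = 1 := by simp [wvec, hbv]
        rw [hw, zsmul_eq_mul, mul_one]
        exact hdd.symm
      · have h1 := hmid i hi0 hiN
        rw [hdd] at h1
        have h2 : (x i : ℝ) = 0 := by
          have hne : ((2*(n:ℝ))+1) ≠ 0 := by positivity
          have h1' : ((2*(n:ℝ))+1) * (x i : ℝ) = 0 := by rw [h1, sub_self]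
          rcases mul_eq_zero.mp h1' with h' | h'
          · exact absurd h' hne
          · exact h'
        simp [wvec, hi0, hiN, h2]
  · rintro ⟨c, hc⟩
    funext i
    have hxa : (x a : ℝ) = c := by rw [hc a]; simp [wvec, hav, zsmul_eq_mul]
    have hxb : (x b : ℝ) = c := by rw [hc b]; simp [wvec, hbv, zsmul_eq_mul]
    show ∑ j, Atilde n i j * (x j : ℝ) = _
    rw [sum_two_aux _ a b hab ?hz]
    case hz =>
      intro j hja hjb
      have hja' : (j:ℕ) ≠ 0 := fun h' => hja (by simp [Fin.ext_iff, hav, h'])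
      have hjb' : (j:ℕ) ≠ 2*n+1 := fun h' => hjb (by simp [Fin.ext_iff, hbv, h'])
      have : (x j : ℝ) = 0 := by rw [hc j]; simp [wvec, hja', hjb']
      rw [this, mul_zero]
    rw [hxa, hxb]
    show _ = ((2*n:ℝ)-1) * x i
    by_cases hi0 : (i:ℕ) = 0
    · have : i = a := by simp [Fin.ext_iff, hav, hi0]
      subst this
      rw [eaa, eab, hxa]; ring
    · by_cases hiN : (i:ℕ) = 2*n+1
      · have : i = b := by simp [Fin.ext_iff, hbv, hiN]
        subst this
        rw [eba, ebb, hxb]; ring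
      · have hxi : (x i : ℝ) = 0 := by rw [hc i]; simp [wvec, hi0, hiN]
        rw [eia i hi0 hiN, eib i hi0 hiN, hxi]; ring
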